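/- The terms Ω and Sk.Ω are NOT contextually equivalent under the relaxed semantics of λS: Ω diverges while Sk.Ω is already a stuck normal form, hence Ω ≄ Sk.Ω; combined with Ω ≃_p Sk.Ω this shows the inclusion ≃ ⊆ ≃_p is strict. -/
import Mathlib


/-- Terms of the calculus λS: variables, abstractions, applications,
    shift (Sk.t) and reset (⟨t⟩). -/
inductive Tm : Type
  | var : ℕ → Tm
  | lam : ℕ → Tm → Tm
  | app : Tm → Tm → Tm
  | shift : ℕ → Tm → Tm
  | reset : Tm → Tm
deriving DecidableEq

namespace Tm

/-- Values are λ-abstractions. -/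
def IsValue : Tm → Prop
  | lam _ _ => True
  | _ => False

/-- Free variables. -/
def fv : Tm → Finset ℕ
  | var x => {x}
  | lam x t => fv t \ {x}
  | app a b => fv a ∪ fv b
  | shift k t => fv t \ {k}
  | reset t => fv t

def Closed (t : Tm) : Prop := fv t = ∅

/-- Substitution t{v/x} (substituted terms are closed values, so no
    capture can occur). -/
def subst : Tm → ℕ → Tm → Tm
  | var y, x, v => if y = x then v else var y
  | lam y t, x, v => if y = x then lam y t else lam y (subst t x v)
  | app a b, x, v => app (subst a x v) (subst b x v)
  | shift k t, x, v => if k = x then shift k t else shift k (subst t x v)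
  | reset t, x, v => reset (subst t x v)

end Tm

/-- (Evaluation) contexts F ::= [] | v F | F t | ⟨F⟩, represented outside-in.
    Pure contexts E are those with no reset constructor. -/
inductive Ctx : Type
  | hole : Ctx
  | appR : Tm → Ctx → Ctx   -- v F
  | appL : Ctx → Tm → Ctx   -- F t
  | reset : Ctx → Ctx       -- ⟨F⟩
deriving DecidableEq

namespace Ctx

def plug : Ctx → Tm → Tm
  | hole, t => t
  | appR v F, t => Tm.app v (F.plug t)
  | appL F u, t => Tm.app (F.plug t) u
  | reset F, t => Tm.reset (F.plug t)

/-- Well-formedness: in `v F` the term v must be a value. -/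
def Wf : Ctx → Prop
  | hole => True
  | appR v F => v.IsValue ∧ F.Wf
  | appL F _ => F.Wf
  | reset F => F.Wf

/-- Pure contexts contain no reset around the hole. -/
def Pure : Ctx → Prop
  | hole => True
  | appR _ F => F.Pure
  | appL F _ => F.Pure
  | reset _ => False

def fv : Ctx → Finset ℕ
  | hole => ∅
  | appR v F => v.fv ∪ F.fv
  | appL F u => F.fv ∪ u.fv
  | reset F => F.fv

/-- Context composition: (F.comp G)[t] = F[G[t]]. -/
def comp : Ctx → Ctx → Ctx
  | hole, G => G
  | appR v F, G => appR v (F.comp G)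
  | appL F u, G => appL (F.comp G) u
  | reset F, G => reset (F.comp G)

end Ctx

/-- A canonical fresh variable not occurring in the finite set s. -/
def fresh (s : Finset ℕ) : ℕ := s.sup id + 1

/-- The reduction relation →v of λS. -/
inductive Red : Tm → Tm → Prop
  | beta (F : Ctx) (x : ℕ) (t v : Tm) :
      F.Wf → v.IsValue →
      Red (F.plug (Tm.app (Tm.lam x t) v)) (F.plug (t.subst x v))
  | shift (F E : Ctx) (k : ℕ) (t : Tm) :
      F.Wf → E.Wf → E.Pure →
      Red (F.plug (Tm.reset (E.plug (Tm.shift k t))))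
          (F.plug (Tm.reset (t.subst k
            (Tm.lam (fresh E.fv) (Tm.reset (E.plug (Tm.var (fresh E.fv))))))))
  | reset (F : Ctx) (v : Tm) :
      F.Wf → v.IsValue →
      Red (F.plug (Tm.reset v)) (F.plug v)

/-- A term is stuck if it is not a value and admits no reduction step. -/
def Stuck (t : Tm) : Prop := ¬ t.IsValue ∧ ∀ t', ¬ Red t t'

/-- A normal form is a value or a stuck term. -/
def NormalForm (t : Tm) : Prop := t.IsValue ∨ Stuck t

/-- Reflexive-transitive closure of reduction. -/
def Steps : Tm → Tm → Prop := Relation.ReflTransGen Red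

/-- Evaluation: t ⇓ t' when t →v* t' and t' is irreducible. -/
def Evals (t t' : Tm) : Prop := Steps t t' ∧ ∀ u, ¬ Red t' u

/-- Redexes: (λx.t) v, ⟨E[Sk.t]⟩ with E pure, and ⟨v⟩. -/
def IsRedex (r : Tm) : Prop :=
  (∃ x t v, Tm.IsValue v ∧ r = Tm.app (Tm.lam x t) v) ∨
  (∃ E : Ctx, ∃ k t, E.Wf ∧ E.Pure ∧ r = Tm.reset (E.plug (Tm.shift k t))) ∨
  (∃ v, Tm.IsValue v ∧ r = Tm.reset v)

/-- Divergence: an infinite reduction sequence. -/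
def Diverges (t : Tm) : Prop := ∃ f : ℕ → Tm, f 0 = t ∧ ∀ n, Red (f n) (f (n + 1))

/-- Ω = (λx.x x)(λx.x x). -/
def Omega : Tm :=
  Tm.app (Tm.lam 0 (Tm.app (Tm.var 0) (Tm.var 0)))
         (Tm.lam 0 (Tm.app (Tm.var 0) (Tm.var 0)))

/-- Arbitrary one-hole contexts C. -/
inductive GCtx : Type
  | hole : GCtx
  | lam : ℕ → GCtx → GCtx
  | appL : GCtx → Tm → GCtx
  | appR : Tm → GCtx → GCtx
  | shift : ℕ → GCtx → GCtx
  | reset : GCtx → GCtx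

def GCtx.plug : GCtx → Tm → Tm
  | hole, t => t
  | lam x C, t => Tm.lam x (C.plug t)
  | appL C u, t => Tm.app (C.plug t) u
  | appR u C, t => Tm.app u (C.plug t)
  | shift k C, t => Tm.shift k (C.plug t)
  | reset C, t => Tm.reset (C.plug t)

/-- Contextual equivalence for the relaxed semantics. -/
def CtxEquiv (t0 t1 : Tm) : Prop :=
  ∀ C : GCtx, (C.plug t0).Closed → (C.plug t1).Closed →
    ((∃ v, v.IsValue ∧ Evals (C.plug t0) v) ↔ (∃ v, v.IsValue ∧ Evals (C.plug t1) v)) ∧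
    ((∃ s, Stuck s ∧ Evals (C.plug t0) s) ↔ (∃ s, Stuck s ∧ Evals (C.plug t1) s))

/-- Contextual equivalence for the original (top-level reset) semantics. -/
def CtxEquivP (t0 t1 : Tm) : Prop :=
  ∀ C : GCtx, (Tm.reset (C.plug t0)).Closed → (Tm.reset (C.plug t1)).Closed →
    ((∃ v, v.IsValue ∧ Evals (Tm.reset (C.plug t0)) v) ↔
     (∃ v, v.IsValue ∧ Evals (Tm.reset (C.plug t1)) v))

/-- The term-generating closure of a relation R on closed terms. -/
inductive TmClo (R : Tm → Tm → Prop) : Tm → Tm → Prop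
  | base {t t'} : R t t' → TmClo R t t'
  | var (x : ℕ) : TmClo R (Tm.var x) (Tm.var x)
  | lam {t t'} (x : ℕ) : TmClo R t t' → TmClo R (Tm.lam x t) (Tm.lam x t')
  | app {a a' b b'} : TmClo R a a' → TmClo R b b' →
      TmClo R (Tm.app a b) (Tm.app a' b')
  | shift {t t'} (k : ℕ) : TmClo R t t' → TmClo R (Tm.shift k t) (Tm.shift k t')
  | reset {t t'} : TmClo R t t' → TmClo R (Tm.reset t) (Tm.reset t')

set_option linter.unnecessarySeqFocus false

section Aux

lemma plug_eq_lam {F : Ctx} {r : Tm} {x : ℕ} {b : Tm}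
    (h : F.plug r = Tm.lam x b) : F = Ctx.hole ∧ r = Tm.lam x b := by
  cases F <;> simp [Ctx.plug] at h ⊢ <;> exact h

lemma plug_value {F : Ctx} {r : Tm} (h : (F.plug r).IsValue) :
    F = Ctx.hole ∧ r.IsValue := by
  cases F <;> simp [Ctx.plug, Tm.IsValue] at h ⊢ <;> exact h

lemma value_not_red {v u : Tm} (hv : v.IsValue) : ¬ Red v u := by
  intro h
  cases h <;> exact absurd (plug_value hv).2 (by simp [Tm.IsValue])

lemma redex_not_value {r : Tm} (h : IsRedex r) : ¬ r.IsValue := by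
  rcases h with ⟨x, t, v, hv, rfl⟩ | ⟨E, k, t, hE, hP, rfl⟩ | ⟨v, hv, rfl⟩ <;>
    simp [Tm.IsValue]

lemma redex_not_lam {r : Tm} (h : IsRedex r) (x : ℕ) (b : Tm) : r ≠ Tm.lam x b := by
  rcases h with ⟨x, t, v, hv, rfl⟩ | ⟨E, k, t, hE, hP, rfl⟩ | ⟨v, hv, rfl⟩ <;> simp

end Aux
section UD

lemma pure_no_redex : ∀ (E G : Ctx) (k : ℕ) (t s : Tm), E.Pure → E.Wf → G.Wf →
    IsRedex s → E.plug (Tm.shift k t) = G.plug s → False := by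
  intro E
  induction E with
  | hole =>
    intro G k t s _ _ hGw hs heq
    cases G with
    | hole =>
      simp [Ctx.plug] at heq
      subst heq
      rcases hs with ⟨x, b, v, hv, h⟩ | ⟨E', k', t', _, _, h⟩ | ⟨v, hv, h⟩ <;> simp at h
    | appR v F => simp [Ctx.plug] at heq
    | appL F u => simp [Ctx.plug] at heq
    | reset F => simp [Ctx.plug] at heq
  | appR v E' ih =>
    intro G k t s hP hW hGw hs heq
    cases G with
    | hole =>
      simp [Ctx.plug] at heq
      subst heq
      rcases hs with ⟨x, b, w, hw, h⟩ | ⟨E2, k2, t2, _, _, h⟩ | ⟨w, hw, h⟩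
      · simp [Ctx.plug] at h
        obtain ⟨h1, h2⟩ := h
        rw [← h2] at hw
        exact absurd (plug_value hw).2 (by simp [Tm.IsValue])
      · simp [Ctx.plug] at h
      · simp [Ctx.plug] at h
    | appR v0 G' =>
      simp [Ctx.plug] at heq
      exact ih G' k t s hP hW.2 hGw.2 hs heq.2
    | appL G' u =>
      simp [Ctx.plug] at heq
      obtain ⟨h1, h2⟩ := heq
      rw [h1] at hW
      exact absurd (plug_value hW.1).2 (redex_not_value hs)
    | reset F => simp [Ctx.plug] at heq
  | appL E' u ih =>
    intro G k t s hP hW hGw hs heq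
    cases G with
    | hole =>
      simp [Ctx.plug] at heq
      subst heq
      rcases hs with ⟨x, b, w, hw, h⟩ | ⟨E2, k2, t2, _, _, h⟩ | ⟨w, hw, h⟩
      · simp [Ctx.plug] at h
        obtain ⟨h1, h2⟩ := h
        exact absurd (plug_eq_lam h1).2 (by simp)
      · simp [Ctx.plug] at h
      · simp [Ctx.plug] at h
    | appR v0 G' =>
      simp [Ctx.plug] at heq
      obtain ⟨h1, h2⟩ := heq
      rw [← h1] at hGw
      exact absurd (plug_value hGw.1).2 (by simp [Tm.IsValue])
    | appL G' u' =>
      simp [Ctx.plug] at heq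
      exact ih G' k t s hP hW hGw hs heq.1
    | reset F => simp [Ctx.plug] at heq
  | reset E' ih =>
    intro G k t s hP
    exact absurd hP (by simp [Ctx.Pure])

lemma pure_shift_inj : ∀ (E E' : Ctx) (k k' : ℕ) (t t' : Tm), E.Pure → E'.Pure →
    E.Wf → E'.Wf → E.plug (Tm.shift k t) = E'.plug (Tm.shift k' t') →
    E = E' ∧ k = k' ∧ t = t' := by
  intro E
  induction E with
  | hole =>
    intro E' k k' t t' _ hP' _ hW' heq
    cases E' with
    | hole => simp [Ctx.plug] at heq; exact ⟨rfl, heq.1, heq.2⟩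
    | appR v F => simp [Ctx.plug] at heq
    | appL F u => simp [Ctx.plug] at heq
    | reset F => exact absurd hP' (by simp [Ctx.Pure])
  | appR v E1 ih =>
    intro E' k k' t t' hP hP' hW hW' heq
    cases E' with
    | hole => simp [Ctx.plug] at heq
    | appR v0 G' =>
      simp [Ctx.plug] at heq
      obtain ⟨h1, h2⟩ := heq
      obtain ⟨rfl, rfl, rfl⟩ := ih G' k k' t t' hP hP' hW.2 hW'.2 h2
      subst h1; exact ⟨rfl, rfl, rfl⟩
    | appL G' u =>
      simp [Ctx.plug] at heq
      obtain ⟨h1, h2⟩ := heq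
      rw [h1] at hW
      exact absurd (plug_value hW.1).2 (by simp [Tm.IsValue])
    | reset F => exact absurd hP' (by simp [Ctx.Pure])
  | appL E1 u ih =>
    intro E' k k' t t' hP hP' hW hW' heq
    cases E' with
    | hole => simp [Ctx.plug] at heq
    | appR v0 G' =>
      simp [Ctx.plug] at heq
      obtain ⟨h1, h2⟩ := heq
      rw [← h1] at hW'
      exact absurd (plug_value hW'.1).2 (by simp [Tm.IsValue])
    | appL G' u' =>
      simp [Ctx.plug] at heq
      obtain ⟨h1, h2⟩ := heq
      obtain ⟨rfl, rfl, rfl⟩ := ih G' k k' t t' hP hP' hW hW' h1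
      subst h2; exact ⟨rfl, rfl, rfl⟩
    | reset F => exact absurd hP' (by simp [Ctx.Pure])
  | reset E1 ih =>
    intro E' k k' t t' hP
    exact absurd hP (by simp [Ctx.Pure])

lemma redex_hole : ∀ (G : Ctx) (r s : Tm), G.Wf → IsRedex r → IsRedex s →
    r = G.plug s → G = Ctx.hole := by
  intro G r s hGw hr hs heq
  cases G with
  | hole => rfl
  | appR v G' =>
    exfalso
    rcases hr with ⟨x, b, w, hw, h⟩ | ⟨E, k, t, hE, hP, h⟩ | ⟨w, hw, h⟩ <;>
      rw [h] at heq <;> simp [Ctx.plug] at heq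
    obtain ⟨h1, h2⟩ := heq
    rw [h2] at hw
    exact absurd (plug_value hw).2 (redex_not_value hs)
  | appL G' u =>
    exfalso
    rcases hr with ⟨x, b, w, hw, h⟩ | ⟨E, k, t, hE, hP, h⟩ | ⟨w, hw, h⟩ <;>
      rw [h] at heq <;> simp [Ctx.plug] at heq
    obtain ⟨h1, h2⟩ := heq
    exact redex_not_lam hs x b (plug_eq_lam h1.symm).2
  | reset G' =>
    exfalso
    rcases hr with ⟨x, b, w, hw, h⟩ | ⟨E, k, t, hE, hP, h⟩ | ⟨w, hw, h⟩ <;>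
      rw [h] at heq <;> simp [Ctx.plug] at heq
    · exact pure_no_redex E G' k t s hP hE hGw hs heq
    · rw [heq] at hw
      exact absurd (plug_value hw).2 (redex_not_value hs)

lemma unique_decomp : ∀ (F G : Ctx) (r s : Tm), F.Wf → G.Wf →
    IsRedex r → IsRedex s → F.plug r = G.plug s → F = G ∧ r = s := by
  intro F
  induction F with
  | hole =>
    intro G r s _ hGw hr hs heq
    simp [Ctx.plug] at heq
    have := redex_hole G r s hGw hr hs heq
    subst this
    simp [Ctx.plug] at heq
    exact ⟨rfl, heq⟩
  | appR v F' ih =>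
    intro G r s hW hGw hr hs heq
    cases G with
    | hole =>
      simp [Ctx.plug] at heq
      have := redex_hole (Ctx.appR v F') s r hW hs hr heq.symm
      simp at this
    | appR v0 G' =>
      simp [Ctx.plug] at heq
      obtain ⟨rfl, h2⟩ := heq
      obtain ⟨rfl, rfl⟩ := ih G' r s hW.2 hGw.2 hr hs h2
      exact ⟨rfl, rfl⟩
    | appL G' u =>
      simp [Ctx.plug] at heq
      obtain ⟨h1, h2⟩ := heq
      rw [h1] at hW
      exact absurd (plug_value hW.1).2 (redex_not_value hs)
    | reset G' => simp [Ctx.plug] at heq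
  | appL F' u ih =>
    intro G r s hW hGw hr hs heq
    cases G with
    | hole =>
      simp [Ctx.plug] at heq
      have := redex_hole (Ctx.appL F' u) s r hW hs hr heq.symm
      simp at this
    | appR v0 G' =>
      simp [Ctx.plug] at heq
      obtain ⟨h1, h2⟩ := heq
      rw [← h1] at hGw
      exact absurd (plug_value hGw.1).2 (redex_not_value hr)
    | appL G' u' =>
      simp [Ctx.plug] at heq
      obtain ⟨h1, rfl⟩ := heq
      obtain ⟨rfl, rfl⟩ := ih G' r s hW hGw hr hs h1
      exact ⟨rfl, rfl⟩
    | reset G' => simp [Ctx.plug] at heq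
  | reset F' ih =>
    intro G r s hW hGw hr hs heq
    cases G with
    | hole =>
      simp [Ctx.plug] at heq
      have := redex_hole (Ctx.reset F') s r hW hs hr heq.symm
      simp at this
    | appR v0 G' => simp [Ctx.plug] at heq
    | appL G' u' => simp [Ctx.plug] at heq
    | reset G' =>
      simp [Ctx.plug] at heq
      obtain ⟨rfl, rfl⟩ := ih G' r s hW hGw hr hs heq
      exact ⟨rfl, rfl⟩

end UD
section Det

lemma red_cases {t u : Tm} (h : Red t u) :
    (∃ F x b w, Ctx.Wf F ∧ Tm.IsValue w ∧ t = F.plug (Tm.app (Tm.lam x b) w) ∧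
        u = F.plug (b.subst x w)) ∨
    (∃ F E kk s, Ctx.Wf F ∧ Ctx.Wf E ∧ Ctx.Pure E ∧
        t = F.plug (Tm.reset (E.plug (Tm.shift kk s))) ∧
        u = F.plug (Tm.reset (s.subst kk
          (Tm.lam (fresh E.fv) (Tm.reset (E.plug (Tm.var (fresh E.fv)))))))) ∨
    (∃ F v, Ctx.Wf F ∧ Tm.IsValue v ∧ t = F.plug (Tm.reset v) ∧ u = F.plug v) := by
  cases h with
  | beta F x b w hF hw => exact Or.inl ⟨F, x, b, w, hF, hw, rfl, rfl⟩
  | shift F E kk s hF hE hP => exact Or.inr (Or.inl ⟨F, E, kk, s, hF, hE, hP, rfl, rfl⟩)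
  | reset F v hF hv => exact Or.inr (Or.inr ⟨F, v, hF, hv, rfl, rfl⟩)

lemma red_det {t u u' : Tm} (h1 : Red t u) (h2 : Red t u') : u = u' := by
  rcases red_cases h1 with ⟨F, x, b, w, hF, hw, rfl, rfl⟩ |
      ⟨F, E, kk, s, hF, hE, hP, rfl, rfl⟩ | ⟨F, v, hF, hv, rfl, rfl⟩ <;>
    rcases red_cases h2 with ⟨G, x', b', w', hG, hw', heq, rfl⟩ |
      ⟨G, E', kk', s', hG, hE', hP', heq, rfl⟩ | ⟨G, v', hG, hv', heq, rfl⟩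
  · obtain ⟨rfl, h3⟩ := unique_decomp F G _ _ hF hG
      (Or.inl ⟨x, b, w, hw, rfl⟩) (Or.inl ⟨x', b', w', hw', rfl⟩) heq
    injection h3 with ha hb
    injection ha with hx ht
    subst hx; subst ht; subst hb; rfl
  · obtain ⟨rfl, h3⟩ := unique_decomp F G _ _ hF hG
      (Or.inl ⟨x, b, w, hw, rfl⟩) (Or.inr (Or.inl ⟨E', kk', s', hE', hP', rfl⟩)) heq
    exact absurd h3 (by simp)
  · obtain ⟨rfl, h3⟩ := unique_decomp F G _ _ hF hG
      (Or.inl ⟨x, b, w, hw, rfl⟩) (Or.inr (Or.inr ⟨v', hv', rfl⟩)) heq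
    exact absurd h3 (by simp)
  · obtain ⟨rfl, h3⟩ := unique_decomp F G _ _ hF hG
      (Or.inr (Or.inl ⟨E, kk, s, hE, hP, rfl⟩)) (Or.inl ⟨x', b', w', hw', rfl⟩) heq
    exact absurd h3 (by simp)
  · obtain ⟨rfl, h3⟩ := unique_decomp F G _ _ hF hG
      (Or.inr (Or.inl ⟨E, kk, s, hE, hP, rfl⟩))
      (Or.inr (Or.inl ⟨E', kk', s', hE', hP', rfl⟩)) heq
    injection h3 with h4
    obtain ⟨rfl, rfl, rfl⟩ := pure_shift_inj E E' kk kk' s s' hP hP' hE hE' h4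
    rfl
  · obtain ⟨rfl, h3⟩ := unique_decomp F G _ _ hF hG
      (Or.inr (Or.inl ⟨E, kk, s, hE, hP, rfl⟩)) (Or.inr (Or.inr ⟨v', hv', rfl⟩)) heq
    injection h3 with h4
    rw [← h4] at hv'
    exact absurd (plug_value hv').2 (by simp [Tm.IsValue])
  · obtain ⟨rfl, h3⟩ := unique_decomp F G _ _ hF hG
      (Or.inr (Or.inr ⟨v, hv, rfl⟩)) (Or.inl ⟨x', b', w', hw', rfl⟩) heq
    exact absurd h3 (by simp)
  · obtain ⟨rfl, h3⟩ := unique_decomp F G _ _ hF hG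
      (Or.inr (Or.inr ⟨v, hv, rfl⟩)) (Or.inr (Or.inl ⟨E', kk', s', hE', hP', rfl⟩)) heq
    injection h3 with h4
    rw [h4] at hv
    exact absurd (plug_value hv).2 (by simp [Tm.IsValue])
  · obtain ⟨rfl, h3⟩ := unique_decomp F G _ _ hF hG
      (Or.inr (Or.inr ⟨v, hv, rfl⟩)) (Or.inr (Or.inr ⟨v', hv', rfl⟩)) heq
    injection h3 with h4
    subst h4; rfl

end Det
section OmegaFacts

lemma omega_subst (x : ℕ) (v : Tm) : Omega.subst x v = Omega := by
  by_cases hx : (0 : ℕ) = x <;> simp [Omega, Tm.subst, hx]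

lemma shift_omega_subst (k x : ℕ) (v : Tm) :
    (Tm.shift k Omega).subst x v = Tm.shift k Omega := by
  have h : (Tm.shift k Omega).subst x v =
      if k = x then Tm.shift k Omega else Tm.shift k (Omega.subst x v) := rfl
  rw [h, omega_subst, ite_self]

lemma omega_not_value : ¬ Omega.IsValue := by simp [Omega, Tm.IsValue]

lemma omega_step {F : Ctx} (hF : F.Wf) : Red (F.plug Omega) (F.plug Omega) := by
  have h := Red.beta F 0 (Tm.app (Tm.var 0) (Tm.var 0))
    (Tm.lam 0 (Tm.app (Tm.var 0) (Tm.var 0))) hF (by simp [Tm.IsValue])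
  simpa [Omega, Tm.subst] using h

lemma omega_loop {F : Ctx} (hF : F.Wf) {u : Tm} (h : Red (F.plug Omega) u) :
    u = F.plug Omega :=
  red_det h (omega_step hF)

lemma steps_omega_noval : ∀ (a v : Tm), Steps a v → v.IsValue →
    ∀ F : Ctx, F.Wf → a = F.plug Omega → False := by
  intro a v h
  induction h using Relation.ReflTransGen.head_induction_on with
  | refl =>
    intro hv F hF heq
    rw [heq] at hv
    exact omega_not_value (plug_value hv).2
  | head hred hsteps ih =>
    intro hv F hF heq
    subst heq
    exact ih hv F hF (omega_loop hF hred)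
section Rel

/-- The symmetric base relation relating Ω and Sk.Ω. -/
def R2 (k : ℕ) (a b : Tm) : Prop :=
  (a = Omega ∧ b = Tm.shift k Omega) ∨ (a = Tm.shift k Omega ∧ b = Omega)

lemma S2_refl (k : ℕ) : ∀ t : Tm, TmClo (R2 k) t t := by
  intro t
  induction t with
  | var x => exact TmClo.var x
  | lam x t ih => exact TmClo.lam x ih
  | app a b iha ihb => exact TmClo.app iha ihb
  | shift x t ih => exact TmClo.shift x ih
  | reset t ih => exact TmClo.reset ih

lemma S2_symm {k : ℕ} {a b : Tm} (h : TmClo (R2 k) a b) : TmClo (R2 k) b a := by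
  induction h with
  | base h => exact TmClo.base (h.elim (fun ⟨h1, h2⟩ => Or.inr ⟨h2, h1⟩)
      (fun ⟨h1, h2⟩ => Or.inl ⟨h2, h1⟩))
  | var x => exact TmClo.var x
  | lam x _ ih => exact TmClo.lam x ih
  | app _ _ iha ihb => exact TmClo.app iha ihb
  | shift x _ ih => exact TmClo.shift x ih
  | reset _ ih => exact TmClo.reset ih

lemma omega_fv : Omega.fv = ∅ := by simp [Omega, Tm.fv]

lemma shift_omega_fv (k : ℕ) : (Tm.shift k Omega).fv = ∅ := by
  simp [Tm.fv, omega_fv]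

lemma S2_fv {k : ℕ} {a b : Tm} (h : TmClo (R2 k) a b) : a.fv = b.fv := by
  induction h with
  | base h =>
    rcases h with ⟨rfl, rfl⟩ | ⟨rfl, rfl⟩ <;> rw [omega_fv, shift_omega_fv]
  | var x => rfl
  | lam x _ ih => simp [Tm.fv, ih]
  | app _ _ iha ihb => simp [Tm.fv, iha, ihb]
  | shift x _ ih => simp [Tm.fv, ih]
  | reset _ ih => simp [Tm.fv, ih]

lemma S2_value {k : ℕ} {a b : Tm} (h : TmClo (R2 k) a b) :
    a.IsValue ↔ b.IsValue := by
  induction h with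
  | base h =>
    rcases h with ⟨rfl, rfl⟩ | ⟨rfl, rfl⟩ <;> simp [Omega, Tm.IsValue]
  | var x => exact Iff.rfl
  | lam x _ _ => simp [Tm.IsValue]
  | app _ _ _ _ => simp [Tm.IsValue]
  | shift x _ _ => simp [Tm.IsValue]
  | reset _ _ => simp [Tm.IsValue]

lemma S2_subst {k : ℕ} {a b : Tm} (h : TmClo (R2 k) a b) :
    ∀ {v w : Tm}, TmClo (R2 k) v w → ∀ x : ℕ,
      TmClo (R2 k) (a.subst x v) (b.subst x w) := by
  induction h with
  | base h =>
    intro v w _ x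
    rcases h with ⟨rfl, rfl⟩ | ⟨rfl, rfl⟩
    · rw [omega_subst, shift_omega_subst]; exact TmClo.base (Or.inl ⟨rfl, rfl⟩)
    · rw [omega_subst, shift_omega_subst]; exact TmClo.base (Or.inr ⟨rfl, rfl⟩)
  | var y =>
    intro v w hvw x
    by_cases hy : y = x <;> simp [Tm.subst, hy]
    · exact hvw
    · exact TmClo.var y
  | lam y h ih =>
    intro v w hvw x
    by_cases hy : y = x <;> simp [Tm.subst, hy]
    · exact TmClo.lam x h
    · exact TmClo.lam y (ih hvw x)
  | app _ _ iha ihb =>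
    intro v w hvw x
    exact TmClo.app (iha hvw x) (ihb hvw x)
  | shift y h ih =>
    intro v w hvw x
    by_cases hy : y = x <;> simp [Tm.subst, hy]
    · exact TmClo.shift x h
    · exact TmClo.shift y (ih hvw x)
  | reset _ ih =>
    intro v w hvw x
    exact TmClo.reset (ih hvw x)

/-- Context closure of TmClo. -/
inductive CClo (R : Tm → Tm → Prop) : Ctx → Ctx → Prop
  | hole : CClo R Ctx.hole Ctx.hole
  | appR {v v' : Tm} {F F' : Ctx} : TmClo R v v' → CClo R F F' →
      CClo R (Ctx.appR v F) (Ctx.appR v' F')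
  | appL {F F' : Ctx} {u u' : Tm} : CClo R F F' → TmClo R u u' →
      CClo R (Ctx.appL F u) (Ctx.appL F' u')
  | reset {F F' : Ctx} : CClo R F F' → CClo R (Ctx.reset F) (Ctx.reset F')

lemma CClo_plug {R : Tm → Tm → Prop} {F G : Ctx} (h : CClo R F G) :
    ∀ {r s : Tm}, TmClo R r s → TmClo R (F.plug r) (G.plug s) := by
  induction h with
  | hole => intro r s hrs; exact hrs
  | appR hv _ ih => intro r s hrs; exact TmClo.app hv (ih hrs)
  | appL _ hu ih => intro r s hrs; exact TmClo.app (ih hrs) hu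
  | reset _ ih => intro r s hrs; exact TmClo.reset (ih hrs)

lemma CClo_wf {k : ℕ} {F G : Ctx} (h : CClo (R2 k) F G) : F.Wf ↔ G.Wf := by
  induction h with
  | hole => exact Iff.rfl
  | appR hv _ ih => simp [Ctx.Wf]; exact and_congr (S2_value hv) ih
  | appL _ _ ih => exact ih
  | reset _ ih => exact ih

lemma CClo_pure {k : ℕ} {F G : Ctx} (h : CClo (R2 k) F G) : F.Pure ↔ G.Pure := by
  induction h with
  | hole => exact Iff.rfl
  | appR _ _ ih => exact ih
  | appL _ _ ih => exact ih
  | reset _ _ => exact Iff.rfl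

lemma CClo_fv {k : ℕ} {F G : Ctx} (h : CClo (R2 k) F G) : F.fv = G.fv := by
  induction h with
  | hole => rfl
  | appR hv _ ih => simp [Ctx.fv, S2_fv hv, ih]
  | appL _ hu ih => simp [Ctx.fv, S2_fv hu, ih]
  | reset _ ih => simp [Ctx.fv, ih]

end Rel
section Decomp

lemma decomp {k : ℕ} : ∀ (F : Ctx) (r t1 : Tm), TmClo (R2 k) (F.plug r) t1 →
    (∀ x b, r ≠ Tm.lam x b) →
    ∃ G s, t1 = G.plug s ∧ CClo (R2 k) F G ∧ TmClo (R2 k) r s := by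
  intro F
  induction F with
  | hole =>
    intro r t1 h _
    exact ⟨Ctx.hole, t1, rfl, CClo.hole, h⟩
  | appR v F' ih =>
    intro r t1 h hlam
    rw [show (Ctx.appR v F').plug r = Tm.app v (F'.plug r) from rfl] at h
    cases h with
    | base h =>
      exfalso
      rcases h with ⟨h1, h2⟩ | ⟨h1, h2⟩
      · rw [Omega] at h1
        injection h1 with ha hb
        exact hlam _ _ (plug_eq_lam hb).2
      · exact absurd h1 (by simp [Omega])
    | app ha hb =>
      obtain ⟨G', s, rfl, hc, hrs⟩ := ih r _ hb hlam
      exact ⟨Ctx.appR _ G', s, rfl, CClo.appR ha hc, hrs⟩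
  | appL F' u ih =>
    intro r t1 h hlam
    rw [show (Ctx.appL F' u).plug r = Tm.app (F'.plug r) u from rfl] at h
    cases h with
    | base h =>
      exfalso
      rcases h with ⟨h1, h2⟩ | ⟨h1, h2⟩
      · rw [Omega] at h1
        injection h1 with ha hb
        exact hlam _ _ (plug_eq_lam ha).2
      · exact absurd h1 (by simp [Omega])
    | app ha hb =>
      obtain ⟨G', s, rfl, hc, hrs⟩ := ih r _ ha hlam
      exact ⟨Ctx.appL G' _, s, rfl, CClo.appL hc hb, hrs⟩
  | reset F' ih =>
    intro r t1 h hlam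
    rw [show (Ctx.reset F').plug r = Tm.reset (F'.plug r) from rfl] at h
    cases h with
    | base h =>
      exfalso
      rcases h with ⟨h1, h2⟩ | ⟨h1, h2⟩
      · exact absurd h1 (by simp [Omega])
      · exact absurd h1 (by simp [Omega])
    | reset ha =>
      obtain ⟨G', s, rfl, hc, hrs⟩ := ih r _ ha hlam
      exact ⟨Ctx.reset G', s, rfl, CClo.reset hc, hrs⟩

end Decomp
section Main

lemma comp_plug : ∀ (F G : Ctx) (t : Tm), (F.comp G).plug t = F.plug (G.plug t) := by
  intro F G t
  induction F with
  | hole => rfl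
  | appR v F' ih => simp [Ctx.comp, Ctx.plug, ih]
  | appL F' u ih => simp [Ctx.comp, Ctx.plug, ih]
  | reset F' ih => simp [Ctx.comp, Ctx.plug, ih]

lemma comp_wf : ∀ (F G : Ctx), F.Wf → G.Wf → (F.comp G).Wf := by
  intro F G hF hG
  induction F with
  | hole => exact hG
  | appR v F' ih => exact ⟨hF.1, ih hF.2⟩
  | appL F' u ih => exact ih hF
  | reset F' ih => exact ih hF

lemma main {k : ℕ} {t0 v : Tm} (h : Steps t0 v) (hv : v.IsValue) :
    ∀ t1, TmClo (R2 k) t0 t1 → ∃ w, w.IsValue ∧ Steps t1 w := by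
  induction h using Relation.ReflTransGen.head_induction_on with
  | refl =>
    intro t1 h01
    exact ⟨t1, (S2_value h01).mp hv, Relation.ReflTransGen.refl⟩
  | head hred hsteps ih =>
    intro t1 h01
    rcases red_cases hred with ⟨F, x, b, w0, hF, hw0, heq, rfl⟩ |
        ⟨F, E, kk, s0, hF, hE, hP, heq, rfl⟩ | ⟨F, w0, hF, hw0, heq, rfl⟩
    -- beta case
    · subst heq
      obtain ⟨G, s, rfl, hcc, hrs⟩ := decomp F _ t1 h01 (by simp)
      cases hrs with
      | base hb =>
        rcases hb with ⟨h1, h2⟩ | ⟨h1, h2⟩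
        · -- the redex is Omega itself; the contractum is again Omega
          rw [Omega] at h1
          injection h1 with ha hb'
          injection ha with hx hbod
          subst hx; subst hbod; subst hb'
          have hc : (Tm.app (Tm.var 0) (Tm.var 0)).subst 0
              (Tm.lam 0 (Tm.app (Tm.var 0) (Tm.var 0))) =
              Tm.app (Tm.lam 0 (Tm.app (Tm.var 0) (Tm.var 0)))
                (Tm.lam 0 (Tm.app (Tm.var 0) (Tm.var 0))) := by
            simp [Tm.subst]
          rw [hc] at ih
          exact ih _ h01
        · exact absurd h1 (by simp [Omega])
      | app h1 h2 =>
        cases h1 with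
        | base hb =>
          rcases hb with ⟨h1, _⟩ | ⟨h1, _⟩ <;> exact absurd h1 (by simp [Omega])
        | lam x h1 =>
          rename_i w2 b2
          have hGwf : G.Wf := (CClo_wf hcc).mp hF
          have hval := (S2_value h2).mp hw0
          have step := Red.beta G x b2 w2 hGwf hval
          have rel := CClo_plug hcc (S2_subst h1 h2 x)
          obtain ⟨w', hw', hst⟩ := ih _ rel
          exact ⟨w', hw', Relation.ReflTransGen.head step hst⟩
    -- shift case
    · subst heq
      obtain ⟨G, s, rfl, hcc, hrs⟩ := decomp F _ t1 h01 (by simp)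
      cases hrs with
      | base hb =>
        rcases hb with ⟨h1, _⟩ | ⟨h1, _⟩ <;> exact absurd h1 (by simp [Omega])
      | reset hX =>
        obtain ⟨E1, s', rfl, hccE, hrs'⟩ := decomp E _ _ hX (by simp)
        cases hrs' with
        | base hb =>
          rcases hb with ⟨h1, _⟩ | ⟨h1, h2⟩
          · exact absurd h1 (by simp [Omega])
          · -- the shift term is Sk.Ω itself: the contractum contains Ω in
            -- evaluation position, contradicting termination
            injection h1 with hk0 hs0
            subst hk0; subst hs0; subst h2
            exfalso
            refine steps_omega_noval _ v hsteps hv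
              (F.comp (Ctx.reset Ctx.hole)) (comp_wf F _ hF trivial) ?_
            rw [comp_plug]
            simp [Ctx.plug, omega_subst]
        | shift kk2 h1 =>
          rename_i s2
          have hGwf : G.Wf := (CClo_wf hcc).mp hF
          have hE1wf : E1.Wf := (CClo_wf hccE).mp hE
          have hE1p : E1.Pure := (CClo_pure hccE).mp hP
          have hfv : E.fv = E1.fv := CClo_fv hccE
          have step := Red.shift G E1 kk s2 hGwf hE1wf hE1p
          have hL : TmClo (R2 k)
              (Tm.lam (fresh E.fv) (Tm.reset (E.plug (Tm.var (fresh E.fv)))))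
              (Tm.lam (fresh E1.fv) (Tm.reset (E1.plug (Tm.var (fresh E1.fv))))) := by
            rw [← hfv]
            exact TmClo.lam _ (TmClo.reset (CClo_plug hccE (TmClo.var _)))
          have rel := CClo_plug hcc (TmClo.reset (S2_subst h1 hL kk))
          obtain ⟨w', hw', hst⟩ := ih _ rel
          exact ⟨w', hw', Relation.ReflTransGen.head step hst⟩
    -- reset-value case
    · subst heq
      obtain ⟨G, s, rfl, hcc, hrs⟩ := decomp F _ t1 h01 (by simp)
      cases hrs with
      | base hb =>
        rcases hb with ⟨h1, _⟩ | ⟨h1, _⟩ <;> exact absurd h1 (by simp [Omega])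
      | reset h1 =>
        have hGwf : G.Wf := (CClo_wf hcc).mp hF
        have step := Red.reset G _ hGwf ((S2_value h1).mp hw0)
        have rel := CClo_plug hcc h1
        obtain ⟨w', hw', hst⟩ := ih _ rel
        exact ⟨w', hw', Relation.ReflTransGen.head step hst⟩

end Main
section Final

lemma stuck_shift_omega (k : ℕ) : Stuck (Tm.shift k Omega) := by
  constructor
  · simp [Tm.IsValue]
  · intro t' h
    rcases red_cases h with ⟨F, x, b, w0, hF, hw0, heq, rfl⟩ |
        ⟨F, E, kk, s0, hF, hE, hP, heq, rfl⟩ | ⟨F, w0, hF, hw0, heq, rfl⟩ <;>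
      cases F <;> simp [Ctx.plug] at heq

lemma steps_from_omega : ∀ a s : Tm, Steps a s → a = Omega → s = Omega := by
  intro a s h
  induction h using Relation.ReflTransGen.head_induction_on with
  | refl => intro h; exact h
  | head hred _ ih =>
    rintro rfl
    exact ih (omega_loop (F := Ctx.hole) trivial hred)

lemma gctx_rel (k : ℕ) : ∀ C : GCtx,
    TmClo (R2 k) (C.plug Omega) (C.plug (Tm.shift k Omega)) := by
  intro C
  induction C with
  | hole => exact TmClo.base (Or.inl ⟨rfl, rfl⟩)
  | lam x C ih => exact TmClo.lam x ih
  | appL C u ih => exact TmClo.app ih (S2_refl k u)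
  | appR u C ih => exact TmClo.app (S2_refl k u) ih
  | shift x C ih => exact TmClo.shift x ih
  | reset C ih => exact TmClo.reset ih

end Final

/-- Ω and Sk.Ω are not equivalent under the relaxed semantics
    (Ω diverges, Sk.Ω is a stuck normal form), but are equivalent under the
    original semantics, so the inclusion ≃ ⊆ ≃_p is strict. -/
theorem omega_not_ctxEquiv_shift_omega (k : ℕ) :
    Diverges Omega ∧ Stuck (Tm.shift k Omega) ∧
    ¬ CtxEquiv Omega (Tm.shift k Omega) ∧
    CtxEquivP Omega (Tm.shift k Omega) := by
  refine ⟨⟨fun _ => Omega, rfl, fun n => omega_step (F := Ctx.hole) trivial⟩,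
    stuck_shift_omega k, ?_, ?_⟩
  · intro h
    have hc := h GCtx.hole (by simp [Tm.Closed, GCtx.plug, omega_fv])
      (by simp [Tm.Closed, GCtx.plug, shift_omega_fv])
    have h2 := hc.2.mpr ⟨Tm.shift k Omega, stuck_shift_omega k,
      Relation.ReflTransGen.refl, (stuck_shift_omega k).2⟩
    obtain ⟨s, hs, hst, hirr⟩ := h2
    have hsO : s = Omega := steps_from_omega _ _ hst rfl
    subst hsO
    exact hirr Omega (omega_step (F := Ctx.hole) trivial)
  · intro C _ _
    constructor
    · rintro ⟨v, hv, hst, -⟩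
      obtain ⟨w, hw, hws⟩ := main hst hv _ (TmClo.reset (gctx_rel k C))
      exact ⟨w, hw, hws, fun u hu => value_not_red hw hu⟩
    · rintro ⟨v, hv, hst, -⟩
      obtain ⟨w, hw, hws⟩ := main hst hv _ (TmClo.reset (S2_symm (gctx_rel k C)))
      exact ⟨w, hw, hws, fun u hu => value_not_red hw hu⟩
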